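/- Let $a_i, b_i : \mathbb{R} \to \mathbb{R}$, $i = 1,\dots,p$, evolve under gradient flow of the loss $\mathcal{L} = \frac{1}{2}(Z^{-1}\sum_j a_j b_j - S)^2$, i.e. $a_i' = -b_i (Z^{-2}\sum_j a_j b_j - Z^{-1}S)$ and $b_i' = -a_i (Z^{-2}\sum_j a_j b_j - Z^{-1}S)$. Define $g(t) = Z^{-2}\sum_j a_j(t)b_j(t) - Z^{-1}S$ and $\gamma(t) = \exp(-2\int_0^t g(s)\,ds)$. Then for every $i$ and $t$: $a_i(t) + b_i(t) = \gamma(t)^{1/2}(a_i(0) + b_i(0))$ and $a_i(t) - b_i(t) = \gamma(t)^{-1/2}(a_i(0) - b_i(0))$. -/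

import Mathlib

theorem stmt12 (p : ℕ) (Z S : ℝ) (hZ : 0 < Z)
    (a b : Fin p → ℝ → ℝ)
    (g γ : ℝ → ℝ)
    (hg : g = fun t => Z⁻¹ ^ 2 * ∑ j, a j t * b j t - Z⁻¹ * S)
    (ha : ∀ i t, HasDerivAt (a i) (-(b i t) * g t) t)
    (hb : ∀ i t, HasDerivAt (b i) (-(a i t) * g t) t)
    (hγ : γ = fun t => Real.exp (-2 * ∫ s in (0:ℝ)..t, g s)) :
    ∀ i t, a i t + b i t = Real.sqrt (γ t) * (a i 0 + b i 0) ∧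
      a i t - b i t = (Real.sqrt (γ t))⁻¹ * (a i 0 - b i 0) := by
  have hgc : Continuous g := by
    subst hg
    have hac : ∀ j, Continuous (a j) := fun j =>
      continuous_iff_continuousAt.2 fun t => ((ha j t).differentiableAt).continuousAt
    have hbc : ∀ j, Continuous (b j) := fun j =>
      continuous_iff_continuousAt.2 fun t => ((hb j t).differentiableAt).continuousAt
    exact ((continuous_const.mul (continuous_finset_sum _ fun j _ =>
      (hac j).mul (hbc j))).sub continuous_const)
  set G : ℝ → ℝ := fun t => ∫ s in (0:ℝ)..t, g s with hGdef
  have hG : ∀ t, HasDerivAt G (g t) t := fun t =>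
    intervalIntegral.integral_hasDerivAt_right (hgc.intervalIntegrable _ _)
      (hgc.stronglyMeasurableAtFilter _ _) hgc.continuousAt
  have hG0 : G 0 = 0 := intervalIntegral.integral_same
  have hsqrt : ∀ t, Real.sqrt (γ t) = Real.exp (-G t) := by
    intro t
    rw [hγ]
    have : Real.exp (-2 * ∫ s in (0:ℝ)..t, g s) = (Real.exp (-G t)) ^ 2 := by
      rw [← Real.exp_nat_mul]; norm_num; rfl
    simp only [this]
    exact Real.sqrt_sq (Real.exp_nonneg _)
  intro i t
  -- sum
  have key1 : ∀ t, Real.exp (G t) * (a i t + b i t) = a i 0 + b i 0 := by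
    intro t
    have hderiv : ∀ x, HasDerivAt (fun x => Real.exp (G x) * (a i x + b i x)) 0 x := by
      intro x
      have h1 : HasDerivAt (fun x => Real.exp (G x)) (Real.exp (G x) * g x) x :=
        (Real.hasDerivAt_exp (G x)).comp x (hG x)
      have h2 : HasDerivAt (fun x => a i x + b i x)
          (-(b i x) * g x + -(a i x) * g x) x := (ha i x).add (hb i x)
      have : HasDerivAt (fun x => Real.exp (G x) * (a i x + b i x)) _ x := h1.mul h2
      convert this using 1
      ring
    have : ∀ x y : ℝ, (fun x => Real.exp (G x) * (a i x + b i x)) x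
        = (fun x => Real.exp (G x) * (a i x + b i x)) y :=
      fun x y => is_const_of_deriv_eq_zero
        (fun x => (hderiv x).differentiableAt) (fun x => (hderiv x).deriv) x y
    simpa [hG0] using this t 0
  have key2 : ∀ t, Real.exp (-G t) * (a i t - b i t) = a i 0 - b i 0 := by
    intro t
    have hderiv : ∀ x, HasDerivAt (fun x => Real.exp (-G x) * (a i x - b i x)) 0 x := by
      intro x
      have h1 : HasDerivAt (fun x => Real.exp (-G x)) (Real.exp (-G x) * (-g x)) x :=
        (Real.hasDerivAt_exp (-G x)).comp x (h := fun y => -G y) (hG x).neg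
      have h2 : HasDerivAt (fun x => a i x - b i x)
          (-(b i x) * g x - -(a i x) * g x) x := (ha i x).sub (hb i x)
      have : HasDerivAt (fun x => Real.exp (-G x) * (a i x - b i x)) _ x := h1.mul h2
      convert this using 1
      ring
    have : ∀ x y : ℝ, (fun x => Real.exp (-G x) * (a i x - b i x)) x
        = (fun x => Real.exp (-G x) * (a i x - b i x)) y :=
      fun x y => is_const_of_deriv_eq_zero
        (fun x => (hderiv x).differentiableAt) (fun x => (hderiv x).deriv) x y
    simpa [hG0] using this t 0
  constructor
  · rw [hsqrt, ← key1 t, ← mul_assoc, ← Real.exp_add]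
    simp
  · rw [hsqrt, ← key2 t, ← Real.exp_neg, neg_neg, ← mul_assoc, ← Real.exp_add]
    simp
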